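/- For real numbers μ1 < μ2 and σ > 0, the overlap of the two equal-variance Gaussian densities equals the optimal misclassification rate: ∫ x, min (gaussianPDFReal μ1 σ² x) (gaussianPDFReal μ2 σ² x) = 2·Φ(−(μ2−μ1)/(2σ)), where the integral is over ℝ with respect to Lebesgue measure. -/

import Mathlib

open MeasureTheory ProbabilityTheory
open scoped NNReal

open Set in
lemma gaussianReal_map_affine' (μ σ : ℝ) :
    (gaussianReal 0 1).map (fun x => σ * x + μ) = gaussianReal μ ((σ^2).toNNReal) := by
  have h1 : (gaussianReal (0:ℝ) 1).map (σ * ·) = gaussianReal 0 (NNReal.mk (σ^2) (sq_nonneg _) * 1) := by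
    simpa using gaussianReal_map_const_mul (μ := 0) (v := 1) σ
  have h2 : (fun x => σ * x + μ) = (· + μ) ∘ (σ * ·) := rfl
  rw [h2, ← Measure.map_map (measurable_add_const μ) (measurable_const_mul σ), h1,
    gaussianReal_map_add_const]
  congr 1
  · ring
  · ext
    simp [Real.toNNReal_of_nonneg (sq_nonneg σ), NNReal.coe_mul]

lemma gaussianPDFReal_le_of_sq_le {μ1 μ2 : ℝ} {v : ℝ≥0} (hv : v ≠ 0) {x : ℝ}
    (hle : (x - μ2)^2 ≤ (x - μ1)^2) :
    gaussianPDFReal μ1 v x ≤ gaussianPDFReal μ2 v x := by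
  have hv' : (0:ℝ) < v := by positivity
  unfold gaussianPDFReal
  apply mul_le_mul_of_nonneg_left _ (by positivity)
  apply Real.exp_le_exp.2
  rw [div_le_div_iff_of_pos_right (by positivity)]
  linarith

/-- The standard normal CDF. -/
noncomputable def stdNormalCDF (x : ℝ) : ℝ := ((gaussianReal 0 1) (Set.Iic x)).toReal

open Set in
/-- The overlap of two equal-variance Gaussian densities with means `μ1 < μ2` and standard
deviation `σ > 0` equals the optimal misclassification rate `2·Φ(−(μ2−μ1)/(2σ))`. -/
theorem gaussian_overlap_eq (μ1 μ2 σ : ℝ) (h : μ1 < μ2) (hσ : 0 < σ) :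
    ∫ x, min (gaussianPDFReal μ1 ((σ ^ 2).toNNReal) x)
        (gaussianPDFReal μ2 ((σ ^ 2).toNNReal) x)
      = 2 * stdNormalCDF (-(μ2 - μ1) / (2 * σ)) := by
  set v : ℝ≥0 := (σ ^ 2).toNNReal with hv_def
  have hv : v ≠ 0 := by
    simp [hv_def, Real.toNNReal_eq_zero, not_le]
    positivity
  set m : ℝ := (μ1 + μ2) / 2 with hm
  set c : ℝ := -(μ2 - μ1) / (2 * σ) with hc
  -- integrability
  have hint : Integrable (fun x => min (gaussianPDFReal μ1 v x) (gaussianPDFReal μ2 v x)) :=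
    (integrable_gaussianPDFReal μ1 v).inf (integrable_gaussianPDFReal μ2 v)
  -- split the integral at the midpoint m
  rw [← integral_add_compl (measurableSet_Iic (a := m)) hint, compl_Iic]
  have h1 : ∫ x in Iic m, min (gaussianPDFReal μ1 v x) (gaussianPDFReal μ2 v x)
      = ∫ x in Iic m, gaussianPDFReal μ2 v x := by
    refine setIntegral_congr_fun measurableSet_Iic fun x hx => ?_
    refine min_eq_right (gaussianPDFReal_le_of_sq_le hv ?_)
    simp only [mem_Iic, hm] at hx ⊢
    nlinarith
  have h2 : ∫ x in Ioi m, min (gaussianPDFReal μ1 v x) (gaussianPDFReal μ2 v x)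
      = ∫ x in Ioi m, gaussianPDFReal μ1 v x := by
    refine setIntegral_congr_fun measurableSet_Ioi fun x hx => ?_
    refine min_eq_left (gaussianPDFReal_le_of_sq_le hv ?_)
    simp only [mem_Ioi, hm] at hx ⊢
    nlinarith
  rw [h1, h2]
  -- the standard gaussian has no atoms
  have hnoatom : ∀ t : ℝ, gaussianReal 0 1 {t} = 0 := fun t =>
    (gaussianReal_absolutelyContinuous 0 one_ne_zero) (measure_singleton t)
  -- first piece
  have hA : ∫ x in Iic m, gaussianPDFReal μ2 v x = stdNormalCDF c := by
    have := gaussianReal_apply_eq_integral μ2 hv (Iic m)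
    have heq : gaussianReal μ2 v (Iic m) = gaussianReal 0 1 (Iic c) := by
      rw [← gaussianReal_map_affine' μ2 σ, Measure.map_apply (by fun_prop) measurableSet_Iic]
      congr 1
      ext x
      simp only [mem_preimage, mem_Iic, hc, hm]
      rw [le_div_iff₀ two_pos, le_div_iff₀ (by positivity)]
      constructor <;> intro <;> nlinarith
    rw [heq] at this
    rw [stdNormalCDF, this, ENNReal.toReal_ofReal]
    exact integral_nonneg fun x => gaussianPDFReal_nonneg _ _ _
  -- second piece
  have hB : ∫ x in Ioi m, gaussianPDFReal μ1 v x = stdNormalCDF c := by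
    have := gaussianReal_apply_eq_integral μ1 hv (Ioi m)
    have hmap : (gaussianReal 0 1).map (fun x => -σ * x + μ1) = gaussianReal μ1 v := by
      rw [gaussianReal_map_affine' μ1 (-σ)]; norm_num; rfl
    have heq : gaussianReal μ1 v (Ioi m) = gaussianReal 0 1 (Iic c) := by
      rw [← hmap, Measure.map_apply (by fun_prop) measurableSet_Ioi]
      have hpre : (fun x => -σ * x + μ1) ⁻¹' Ioi m = Iio c := by
        ext x
        simp only [mem_preimage, mem_Ioi, mem_Iio, hc, hm]
        rw [lt_div_iff₀ (by positivity)]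
        constructor <;> intro <;> nlinarith
      rw [hpre]
      exact measure_congr (Iio_ae_eq_Iic' (hnoatom c))
    rw [heq] at this
    rw [stdNormalCDF, this, ENNReal.toReal_ofReal]
    exact integral_nonneg fun x => gaussianPDFReal_nonneg _ _ _
  rw [hA, hB]; ring
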